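/- arXiv:1912.06482 — 6 statements merged into one kernel-verified Lean document; each statement's English description precedes it below -/
import Mathlib

section
/- For all x ∈ ℝ, n ∈ ℕ and δ ∈ (0,1], the remainder r_{n+1}(x) := e^{ix} - ∑_{k=0}^{n} (ix)^k/k! satisfies |r_{n+1}(x)| ≤ C_{n,δ} · |x|^{n+δ}, where C_{n,δ} := 2^{1-δ} / ∏_{k=1}^{n} (k+δ) (with the empty product equal to 1). -/
open Complex Real Finset

private lemma hasDerivAt_Smul (t : ℝ) : HasDerivAt (fun t : ℝ => Complex.I * (t : ℂ)) Complex.I t := by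
  have h : HasDerivAt (fun t : ℝ => (t : ℂ)) 1 t := by
    simpa using (hasDerivAt_id t).ofReal_comp
  simpa using h.const_mul Complex.I

private lemma hasDerivAt_S (n : ℕ) (t : ℝ) :
    HasDerivAt (fun t : ℝ => Complex.exp (Complex.I * t)
        - ∑ k ∈ Finset.range (n + 1), (Complex.I * t) ^ k / (Nat.factorial k))
      (Complex.I * (Complex.exp (Complex.I * t)
        - ∑ k ∈ Finset.range n, (Complex.I * t) ^ k / (Nat.factorial k))) t := by
  have hexp : HasDerivAt (fun t : ℝ => Complex.exp (Complex.I * t))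
      (Complex.exp (Complex.I * t) * Complex.I) t := (hasDerivAt_Smul t).cexp
  have hsum : HasDerivAt (fun t : ℝ => ∑ k ∈ Finset.range (n + 1),
      (Complex.I * t) ^ k / (Nat.factorial k))
      (∑ k ∈ Finset.range (n + 1),
        ((k : ℂ) * (Complex.I * t) ^ (k - 1) * Complex.I) / (Nat.factorial k)) t := by
    apply HasDerivAt.fun_sum
    intro k _
    have hz : HasDerivAt (fun z : ℂ => (Complex.I * z) ^ k / (Nat.factorial k))
        ((k : ℂ) * (Complex.I * (t : ℂ)) ^ (k - 1) * Complex.I / (Nat.factorial k)) (t : ℂ) := by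
      have h := (((hasDerivAt_id ((t : ℝ) : ℂ)).const_mul Complex.I).pow k).div_const
        ((Nat.factorial k : ℂ))
      simpa using h
    exact hz.comp_ofReal
  have hre : (∑ k ∈ Finset.range (n + 1),
      ((k : ℂ) * (Complex.I * t) ^ (k - 1) * Complex.I) / (Nat.factorial k))
      = Complex.I * ∑ k ∈ Finset.range n, (Complex.I * t) ^ k / (Nat.factorial k) := by
    rw [Finset.sum_range_succ']
    have h0t : ((0 : ℕ) : ℂ) * (Complex.I * t) ^ (0 - 1) * Complex.I
        / ((Nat.factorial 0 : ℕ) : ℂ) = 0 := by simp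
    rw [h0t, add_zero, Finset.mul_sum]
    apply Finset.sum_congr rfl
    intro k _
    have hk : ((k : ℂ) + 1) ≠ 0 := by
      have : ((k + 1 : ℕ) : ℂ) ≠ 0 := Nat.cast_ne_zero.mpr (Nat.succ_ne_zero k)
      push_cast at this
      exact this
    have hf : ((Nat.factorial k : ℕ) : ℂ) ≠ 0 := Nat.cast_ne_zero.mpr (Nat.factorial_ne_zero k)
    rw [Nat.add_sub_cancel, Nat.factorial_succ, Nat.cast_mul, Nat.cast_add, Nat.cast_one]
    field_simp
  have := hexp.sub hsum
  rw [hre] at this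
  refine this.congr_deriv ?_
  ring

private lemma key (δ : ℝ) (h0 : 0 < δ) (h1 : δ ≤ 1) : ∀ (n : ℕ) (x : ℝ), 0 ≤ x →
    ‖Complex.exp (Complex.I * x)
        - ∑ k ∈ Finset.range (n + 1), (Complex.I * x) ^ k / (Nat.factorial k)‖
      ≤ ((2 : ℝ) ^ (1 - δ) / ∏ k ∈ Finset.range n, ((k : ℝ) + 1 + δ)) * x ^ ((n : ℝ) + δ) := by
  intro n
  induction n with
  | zero =>
    intro x hx
    simp only [Finset.range_one, Finset.sum_singleton, pow_zero, Nat.factorial_zero,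
      Nat.cast_one, Finset.range_zero, Finset.prod_empty, Nat.cast_zero, zero_add, div_one]
    have hle1 : ‖Complex.exp (Complex.I * x) - 1‖ ≤ x := by
      have := norm_image_sub_le_of_norm_deriv_right_le_segment (C := 1)
        (f := fun t : ℝ => Complex.exp (Complex.I * t))
        (f' := fun t : ℝ => Complex.exp (Complex.I * t) * Complex.I) (a := 0) (b := x)
        (fun t _ => ((hasDerivAt_Smul t).cexp).continuousAt.continuousWithinAt)
        (fun t _ => ((hasDerivAt_Smul t).cexp).hasDerivWithinAt) ?_ x ⟨hx, le_refl x⟩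
      · simpa using this
      · intro t _
        simp [map_mul, Complex.norm_exp, Complex.mul_re]
    have hle2 : ‖Complex.exp (Complex.I * x) - 1‖ ≤ 2 := by
      have h := norm_sub_le (Complex.exp (Complex.I * x)) 1
      simp only [norm_one, Complex.norm_exp, Complex.mul_re,
        Complex.I_re, Complex.ofReal_re, Complex.I_im, Complex.ofReal_im, zero_mul, one_mul,
        mul_zero, sub_zero, zero_sub] at h ⊢
      simp only [neg_zero, zero_mul, Real.exp_zero] at h
      linarith
    rcases le_or_gt x 2 with hx2 | hx2
    · calc ‖Complex.exp (Complex.I * x) - 1‖ ≤ x := hle1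
        _ = x ^ (1 - δ) * x ^ δ := by
            rw [← Real.rpow_add' hx (by linarith), sub_add_cancel, Real.rpow_one]
        _ ≤ (2 : ℝ) ^ (1 - δ) * x ^ δ := by
            apply mul_le_mul_of_nonneg_right _ (Real.rpow_nonneg hx δ)
            exact Real.rpow_le_rpow hx hx2 (by linarith)
    · calc ‖Complex.exp (Complex.I * x) - 1‖ ≤ 2 := hle2
        _ = (2 : ℝ) ^ (1 - δ) * 2 ^ δ := by
            rw [← Real.rpow_add' (by norm_num) (by linarith), sub_add_cancel, Real.rpow_one]
        _ ≤ (2 : ℝ) ^ (1 - δ) * x ^ δ := by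
            apply mul_le_mul_of_nonneg_left _ (Real.rpow_nonneg (by norm_num) _)
            exact Real.rpow_le_rpow (by norm_num) (le_of_lt hx2) (le_of_lt h0)
  | succ n ih =>
    intro x hx
    set C : ℝ := (2 : ℝ) ^ (1 - δ) / ∏ k ∈ Finset.range n, ((k : ℝ) + 1 + δ) with hC
    have hCpos : 0 < C := by
      apply div_pos (Real.rpow_pos_of_pos (by norm_num) _)
      apply Finset.prod_pos
      intro k _
      positivity
    set p : ℝ := (n : ℝ) + 1 + δ with hp
    have hppos : 0 < p := by positivity
    have hC' : (2 : ℝ) ^ (1 - δ) / ∏ k ∈ Finset.range (n + 1), ((k : ℝ) + 1 + δ) = C / p := by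
      rw [Finset.prod_range_succ, hC, div_div]
    rw [hC']
    have hB : ∀ t : ℝ, HasDerivAt (fun t : ℝ => C / p * t ^ p) (C * t ^ ((n : ℝ) + δ)) t := by
      intro t
      have h := Real.hasDerivAt_rpow_const (x := t) (p := p)
        (Or.inr (by have := Nat.cast_nonneg (α := ℝ) n; simp only [hp]; linarith))
      have := h.const_mul (C / p)
      refine this.congr_deriv ?_
      have : p - 1 = (n : ℝ) + δ := by rw [hp]; ring
      rw [this]
      field_simp
    have main := image_norm_le_of_norm_deriv_right_le_deriv_boundary
      (f := fun t : ℝ => Complex.exp (Complex.I * t)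
        - ∑ k ∈ Finset.range (n + 1 + 1), (Complex.I * t) ^ k / (Nat.factorial k))
      (f' := fun t : ℝ => Complex.I * (Complex.exp (Complex.I * t)
        - ∑ k ∈ Finset.range (n + 1), (Complex.I * t) ^ k / (Nat.factorial k)))
      (a := 0) (b := x)
      (fun t _ => (hasDerivAt_S (n + 1) t).continuousAt.continuousWithinAt)
      (fun t _ => (hasDerivAt_S (n + 1) t).hasDerivWithinAt)
      (B := fun t => C / p * t ^ p) (B' := fun t => C * t ^ ((n : ℝ) + δ)) ?_ hB ?_ ⟨hx, le_refl x⟩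
    · calc ‖Complex.exp (Complex.I * x)
          - ∑ k ∈ Finset.range (n + 1 + 1), (Complex.I * x) ^ k / (Nat.factorial k)‖
          ≤ C / p * x ^ p := by simpa using main
        _ = C / p * x ^ ((↑(n + 1) : ℝ) + δ) := by
            congr 1
            push_cast [hp]
            ring
    · -- ‖f 0‖ ≤ B 0
      simp only [Complex.ofReal_zero, mul_zero, Complex.exp_zero]
      rw [Finset.sum_eq_single 0 (fun k _ hk => by simp [zero_pow hk]) (by simp)]
      simp [Real.zero_rpow (ne_of_gt hppos)]
    · intro t ht
      have h1 : ‖Complex.I * (Complex.exp (Complex.I * t)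
          - ∑ k ∈ Finset.range (n + 1), (Complex.I * t) ^ k / (Nat.factorial k))‖
          = ‖Complex.exp (Complex.I * t)
          - ∑ k ∈ Finset.range (n + 1), (Complex.I * t) ^ k / (Nat.factorial k)‖ := by
        rw [norm_mul, Complex.norm_I, one_mul]
      rw [h1]
      exact ih t ht.1

theorem taylor_remainder_exp_I_bound (x : ℝ) (n : ℕ) (δ : ℝ) (h0 : 0 < δ) (h1 : δ ≤ 1) :
    ‖Complex.exp (Complex.I * x)
        - ∑ k ∈ Finset.range (n + 1), (Complex.I * x) ^ k / (Nat.factorial k)‖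
      ≤ ((2 : ℝ) ^ (1 - δ) / ∏ k ∈ Finset.range n, ((k : ℝ) + 1 + δ)) * |x| ^ ((n : ℝ) + δ) := by
  rcases le_or_gt 0 x with hx | hx
  · rw [_root_.abs_of_nonneg hx]
    exact key δ h0 h1 n x hx
  · have hconj : Complex.exp (Complex.I * x)
        - ∑ k ∈ Finset.range (n + 1), (Complex.I * x) ^ k / (Nat.factorial k)
        = starRingEnd ℂ (Complex.exp (Complex.I * (-x : ℝ))
          - ∑ k ∈ Finset.range (n + 1), (Complex.I * (-x : ℝ)) ^ k / (Nat.factorial k)) := by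
      have h1 : Complex.I * ((x : ℝ) : ℂ) = starRingEnd ℂ (Complex.I * ((-x : ℝ) : ℂ)) := by
        simp [Complex.ext_iff]
      rw [map_sub, ← Complex.exp_conj, map_sum, ← h1]
      congr 1
      apply Finset.sum_congr rfl
      intro k _
      rw [map_div₀, map_pow, ← h1]
      congr 1
      simp
    rw [hconj, Complex.norm_conj, _root_.abs_of_neg hx]
    exact key δ h0 h1 n (-x) (by linarith)
end

section
/- For any q ∈ ℝ, sup_{x∈ℝ} |Φ(x+q) - Φ(x)| = 2Φ(|q|/2) - 1 ≤ |q|/√(2π), where Φ is the standard normal cumulative distribution function. -/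
open MeasureTheory Real Set

noncomputable def stdNormalCDF (x : ℝ) : ℝ :=
  ∫ t in Set.Iic x, Real.exp (-t ^ 2 / 2) / Real.sqrt (2 * Real.pi)

noncomputable def φ (t : ℝ) : ℝ := Real.exp (-t ^ 2 / 2) / Real.sqrt (2 * Real.pi)

lemma sqrt2pi_pos : 0 < Real.sqrt (2 * Real.pi) := Real.sqrt_pos.mpr (by positivity)

lemma φ_pos (t : ℝ) : 0 < φ t := by unfold φ; positivity

lemma φ_cont : Continuous φ := by unfold φ; fun_prop

lemma φ_integrable : Integrable φ := by
  have h : Integrable (fun t : ℝ => Real.exp (-(1/2 : ℝ) * t ^ 2)) :=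
    integrable_exp_neg_mul_sq (by norm_num)
  have h2 := h.div_const (Real.sqrt (2 * Real.pi))
  have : φ = fun t : ℝ => Real.exp (-(1/2 : ℝ) * t ^ 2) / Real.sqrt (2 * Real.pi) := by
    funext t; unfold φ; ring_nf
  rw [this]; exact h2

lemma integral_φ : ∫ t, φ t = 1 := by
  have h : ∫ t : ℝ, Real.exp (-(1/2 : ℝ) * t ^ 2) = Real.sqrt (π / (1/2)) :=
    integral_gaussian (1/2)
  have hφ : φ = fun t : ℝ => Real.exp (-(1/2 : ℝ) * t ^ 2) / Real.sqrt (2 * Real.pi) := by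
    funext t; unfold φ; ring_nf
  rw [hφ, integral_div, h]
  rw [show π / (1/2 : ℝ) = 2 * π by ring]
  exact div_self (ne_of_gt sqrt2pi_pos)

lemma cdf_eq (x : ℝ) : stdNormalCDF x = ∫ t in Set.Iic x, φ t := rfl

lemma cdf_sub (a b : ℝ) : stdNormalCDF b - stdNormalCDF a = ∫ t in a..b, φ t := by
  rw [cdf_eq, cdf_eq]
  exact intervalIntegral.integral_Iic_sub_Iic φ_integrable.integrableOn φ_integrable.integrableOn

lemma cdf_mono : Monotone stdNormalCDF := by
  intro a b hab
  have h := cdf_sub a b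
  have h2 : 0 ≤ ∫ t in a..b, φ t :=
    intervalIntegral.integral_nonneg hab fun x _ => (φ_pos x).le
  linarith

lemma cdf_hasDeriv (x : ℝ) : HasDerivAt stdNormalCDF (φ x) x := by
  have h : HasDerivAt (fun u => ∫ t in (0:ℝ)..u, φ t) (φ x) x :=
    intervalIntegral.integral_hasDerivAt_right φ_integrable.intervalIntegrable
      (φ_cont.stronglyMeasurable.stronglyMeasurableAtFilter) φ_cont.continuousAt
  have he : stdNormalCDF = fun u => stdNormalCDF 0 + ∫ t in (0:ℝ)..u, φ t := by
    funext u; rw [← cdf_sub]; ring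
  rw [he]
  simpa using h.const_add (stdNormalCDF 0)

lemma cdf_neg (x : ℝ) : stdNormalCDF (-x) = 1 - stdNormalCDF x := by
  have hsym : ∀ t : ℝ, φ (-t) = φ t := fun t => by simp [φ]
  have h1 : (∫ t in Set.Iic (-x), φ t) = ∫ t in Set.Ioi x, φ t := by
    rw [← integral_comp_neg_Ioi x φ]
    simp_rw [hsym]
  have h2 : (∫ t in Set.Iic x, φ t) + ∫ t in Set.Ioi x, φ t = 1 := by
    rw [intervalIntegral.integral_Iic_add_Ioi φ_integrable.integrableOn φ_integrable.integrableOn]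
    exact integral_φ
  rw [cdf_eq, cdf_eq, h1]; linarith

lemma cdf_zero : stdNormalCDF 0 = 1/2 := by
  have := cdf_neg 0; rw [neg_zero] at this; linarith

lemma g_hasDeriv (L u : ℝ) :
    HasDerivAt (fun v => stdNormalCDF (v + L) - stdNormalCDF v) (φ (u + L) - φ u) u :=
  ((cdf_hasDeriv (u + L)).comp_add_const u L).sub (cdf_hasDeriv u)

lemma φ_le_φ {a b : ℝ} (h : b ^ 2 ≤ a ^ 2) : φ a ≤ φ b := by
  unfold φ
  exact (div_le_div_iff_of_pos_right sqrt2pi_pos).mpr (Real.exp_le_exp.mpr (by linarith))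

lemma centered (L : ℝ) (hL : 0 ≤ L) (a : ℝ) :
    stdNormalCDF (a + L) - stdNormalCDF a ≤ stdNormalCDF (L/2) - stdNormalCDF (-(L/2)) := by
  set g : ℝ → ℝ := fun v => stdNormalCDF (v + L) - stdNormalCDF v with hg
  have hderiv : ∀ u : ℝ, deriv g u = φ (u + L) - φ u := fun u => (g_hasDeriv L u).deriv
  have hdiff : Differentiable ℝ g := fun u => (g_hasDeriv L u).differentiableAt
  have key : g a ≤ g (-(L/2)) := by
    rcases le_total a (-(L/2)) with hc | hc
    · have hmono : MonotoneOn g (Set.Iic (-(L/2))) := by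
        apply monotoneOn_of_deriv_nonneg (convex_Iic _) hdiff.continuous.continuousOn
          (hdiff.differentiableOn)
        intro x hx
        rw [interior_Iic] at hx
        rw [hderiv]
        have : (x + L) ^ 2 ≤ x ^ 2 := by nlinarith [hx.out]
        linarith [φ_le_φ this]
      exact hmono hc Set.self_mem_Iic hc
    · have hanti : AntitoneOn g (Set.Ici (-(L/2))) := by
        apply antitoneOn_of_deriv_nonpos (convex_Ici _) hdiff.continuous.continuousOn
          (hdiff.differentiableOn)
        intro x hx
        rw [interior_Ici] at hx
        rw [hderiv]
        have : x ^ 2 ≤ (x + L) ^ 2 := by nlinarith [hx.out]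
        linarith [φ_le_φ this]
      exact hanti Set.self_mem_Ici hc hc
  simpa [hg, show -(L/2) + L = L/2 by ring] using key

lemma two_cdf_eq (q : ℝ) :
    2 * stdNormalCDF (|q| / 2) - 1 = stdNormalCDF (|q|/2) - stdNormalCDF (-(|q|/2)) := by
  rw [cdf_neg]; ring

lemma upper (q x : ℝ) :
    |stdNormalCDF (x + q) - stdNormalCDF x| ≤ 2 * stdNormalCDF (|q| / 2) - 1 := by
  rw [two_cdf_eq]
  rcases le_total 0 q with hq | hq
  · rw [abs_of_nonneg (sub_nonneg.mpr (cdf_mono (by linarith)))]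
    rw [abs_of_nonneg hq]
    exact centered q hq x
  · rw [abs_of_nonpos (sub_nonpos.mpr (cdf_mono (by linarith))), neg_sub]
    rw [abs_of_nonpos hq]
    have := centered (-q) (by linarith) (x + q)
    simpa [show x + q + -q = x by ring] using this

lemma attained (q : ℝ) :
    |stdNormalCDF (-(q/2) + q) - stdNormalCDF (-(q/2))| = 2 * stdNormalCDF (|q| / 2) - 1 := by
  have h : -(q/2) + q = q/2 := by ring
  rw [h, cdf_neg]
  rcases le_total 0 q with hq | hq
  · rw [abs_of_nonneg (by have := cdf_mono (show (0:ℝ) ≤ q/2 by linarith); rw [cdf_zero] at this; linarith)]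
    rw [abs_of_nonneg hq]; ring
  · rw [abs_of_nonpos (by have := cdf_mono (show q/2 ≤ (0:ℝ) by linarith); rw [cdf_zero] at this; linarith)]
    rw [abs_of_nonpos hq]
    have hn := cdf_neg (q/2)
    rw [show -q/2 = -(q/2) by ring, hn]
    ring

theorem sup_shift_stdNormalCDF (q : ℝ) :
    (⨆ x : ℝ, |stdNormalCDF (x + q) - stdNormalCDF x|) = 2 * stdNormalCDF (|q| / 2) - 1 ∧
      2 * stdNormalCDF (|q| / 2) - 1 ≤ |q| / Real.sqrt (2 * Real.pi) := by
  constructor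
  · apply le_antisymm
    · exact ciSup_le (upper q)
    · have hb : BddAbove (Set.range fun x => |stdNormalCDF (x + q) - stdNormalCDF x|) :=
        ⟨2 * stdNormalCDF (|q| / 2) - 1, by rintro y ⟨x, rfl⟩; exact upper q x⟩
      calc 2 * stdNormalCDF (|q| / 2) - 1
          = |stdNormalCDF (-(q/2) + q) - stdNormalCDF (-(q/2))| := (attained q).symm
        _ ≤ _ := le_ciSup hb (-(q/2))
  · rw [two_cdf_eq, cdf_sub]
    have h1 : ∫ t in -(|q|/2)..(|q|/2), φ t ≤ ∫ t in -(|q|/2)..(|q|/2), 1 / Real.sqrt (2 * Real.pi) := by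
      apply intervalIntegral.integral_mono_on (by have := abs_nonneg q; linarith)
        φ_integrable.intervalIntegrable intervalIntegrable_const
      intro t _
      unfold φ
      exact (div_le_div_iff_of_pos_right sqrt2pi_pos).mpr (Real.exp_le_one_iff.mpr (by nlinarith [sq_nonneg t]))
    rw [intervalIntegral.integral_const, smul_eq_mul] at h1
    calc (∫ t in -(|q|/2)..(|q|/2), φ t) ≤ (|q|/2 - -(|q|/2)) * (1 / Real.sqrt (2 * Real.pi)) := h1
      _ = |q| / Real.sqrt (2 * Real.pi) := by ring
end

section
/- For any p > 0 with p ≠ 1, sup_{x∈ℝ} |Φ(px) - Φ(x)| ≤ min( √((p-1)·ln p / π), (max(p, 1/p) - 1)/√(2πe) ), where Φ is the standard normal CDF. -/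
open MeasureTheory Real
open intervalIntegral

lemma gauss_integrable : Integrable (fun t : ℝ => Real.exp (-t ^ 2 / 2) / Real.sqrt (2 * Real.pi)) := by
  have h : Integrable (fun t : ℝ => Real.exp (-(1/2 : ℝ) * t ^ 2)) := integrable_exp_neg_mul_sq (by norm_num)
  have : (fun t : ℝ => Real.exp (-t ^ 2 / 2) / Real.sqrt (2 * Real.pi))
      = fun t : ℝ => Real.exp (-(1/2 : ℝ) * t ^ 2) * (Real.sqrt (2 * Real.pi))⁻¹ := by
    funext t; rw [div_eq_mul_inv]; ring_nf
  rw [this]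
  exact h.mul_const _

lemma int_texp (a b : ℝ) :
    ∫ t in a..b, t * Real.exp (-t ^ 2) = (Real.exp (-a ^ 2) - Real.exp (-b ^ 2)) / 2 := by
  have h : ∀ t ∈ Set.uIcc a b, HasDerivAt (fun t : ℝ => -Real.exp (-t ^ 2) / 2)
      (t * Real.exp (-t ^ 2)) t := by
    intro t _
    have h1 : HasDerivAt (fun t : ℝ => -t ^ 2) (-(2 * t)) t := by
      simpa using ((hasDerivAt_pow 2 t).fun_neg)
    have h2 := (h1.exp).fun_neg.div_const 2
    refine h2.congr_deriv ?_
    ring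
  have hint : IntervalIntegrable (fun t : ℝ => t * Real.exp (-t ^ 2)) volume a b :=
    (Continuous.mul continuous_id (by continuity)).intervalIntegrable a b
  rw [integral_eq_sub_of_hasDerivAt h hint]
  ring

lemma core1 (a b l : ℝ) (ha : 0 < a) (hab : a ≤ b) (hl : 0 < l) :
    (∫ t in a..b, Real.exp (-t ^ 2 / 2) / Real.sqrt (2 * Real.pi))
      ≤ l / 2 * (Real.log b - Real.log a) + 1 / (8 * Real.pi * l) := by
  have hb : 0 < b := lt_of_lt_of_le ha hab
  have hpi := Real.pi_pos
  have hsq : Real.sqrt (2 * Real.pi) ^ 2 = 2 * Real.pi := Real.sq_sqrt (by positivity)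
  have hs : 0 < Real.sqrt (2 * Real.pi) := Real.sqrt_pos.2 (by positivity)
  have key : (∫ t in a..b, Real.exp (-t ^ 2 / 2) / Real.sqrt (2 * Real.pi))
      ≤ ∫ t in a..b, (l / 2 * (1 / t) + (1 / (4 * Real.pi * l)) * (t * Real.exp (-t ^ 2))) := by
    apply integral_mono_on hab
    · exact gauss_integrable.intervalIntegrable
    · apply ContinuousOn.intervalIntegrable
      apply ContinuousOn.add
      · apply ContinuousOn.mul continuousOn_const
        apply ContinuousOn.div continuousOn_const continuousOn_id
        intro t ht
        rw [Set.uIcc_of_le hab] at ht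
        exact ne_of_gt (lt_of_lt_of_le ha ht.1)
      · exact (continuousOn_const.mul ((continuousOn_id.mul (by fun_prop)))) 
    · intro t ht
      have hta : a ≤ t := ht.1
      have htpos : 0 < t := lt_of_lt_of_le ha hta
      have hE : Real.exp (-t ^ 2 / 2) ^ 2 = Real.exp (-t ^ 2) := by
        rw [sq, ← Real.exp_add]; ring_nf
      set u := Real.exp (-t ^ 2 / 2) with hu
      have h1 : 0 < u := Real.exp_pos _
      have hrhs : l / 2 * (1 / t) + 1 / (4 * Real.pi * l) * (t * Real.exp (-t ^ 2))
          = (2 * Real.pi * l ^ 2 + t ^ 2 * u ^ 2) / (4 * Real.pi * l * t) := by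
        rw [← hE]; field_simp; ring
      rw [hrhs, div_le_div_iff₀ hs (by positivity)]
      set s := Real.sqrt (2 * Real.pi) with hsdef
      have h10 : 2 * l * s * t * u ≤ 2 * Real.pi * l ^ 2 + t ^ 2 * u ^ 2 := by
        nlinarith [sq_nonneg (l * s - t * u), sq_nonneg l]
      have h11 := mul_le_mul_of_nonneg_right h10 hs.le
      have h12 : 2 * l * s * t * u * s = 2 * l * t * u * s ^ 2 := by ring
      rw [h12, hsq] at h11
      linarith
  refine key.trans ?_
  have hint1 : IntervalIntegrable (fun t : ℝ => l / 2 * (1 / t)) volume a b := by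
    apply ContinuousOn.intervalIntegrable
    apply ContinuousOn.mul continuousOn_const
    apply ContinuousOn.div continuousOn_const continuousOn_id
    intro t ht
    rw [Set.uIcc_of_le hab] at ht
    exact ne_of_gt (lt_of_lt_of_le ha ht.1)
  have hint2 : IntervalIntegrable (fun t : ℝ => (1 / (4 * Real.pi * l)) * (t * Real.exp (-t ^ 2))) volume a b := by
    apply Continuous.intervalIntegrable; fun_prop
  rw [integral_add hint1 hint2, intervalIntegral.integral_const_mul, intervalIntegral.integral_const_mul, int_texp,
    integral_one_div (by rw [Set.uIcc_of_le hab]; intro h; exact absurd h.1 (by linarith)),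
    Real.log_div (ne_of_gt hb) (ne_of_gt ha)]
  have e1 : Real.exp (-a ^ 2) ≤ 1 := Real.exp_le_one_iff.2 (by nlinarith)
  have e2 : 0 < Real.exp (-b ^ 2) := Real.exp_pos _
  have hc : 1 / (4 * Real.pi * l) * ((Real.exp (-a ^ 2) - Real.exp (-b ^ 2)) / 2)
      ≤ 1 / (4 * Real.pi * l) * (1 / 2) :=
    mul_le_mul_of_nonneg_left (by linarith) (by positivity)
  have he : 1 / (4 * Real.pi * l) * (1 / 2 : ℝ) = 1 / (8 * Real.pi * l) := by
    field_simp; ring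
  linarith

lemma cdf_diff (a b : ℝ) :
    stdNormalCDF b - stdNormalCDF a
      = ∫ t in a..b, Real.exp (-t ^ 2 / 2) / Real.sqrt (2 * Real.pi) :=
  intervalIntegral.integral_Iic_sub_Iic gauss_integrable.integrableOn gauss_integrable.integrableOn

lemma core2 (a b : ℝ) (ha : 0 ≤ a) (hab : a ≤ b) :
    (∫ t in a..b, Real.exp (-t ^ 2 / 2) / Real.sqrt (2 * Real.pi))
      ≤ (b - a) * (Real.exp (-a ^ 2 / 2) / Real.sqrt (2 * Real.pi)) := by
  have key : (∫ t in a..b, Real.exp (-t ^ 2 / 2) / Real.sqrt (2 * Real.pi))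
      ≤ ∫ _t in a..b, Real.exp (-a ^ 2 / 2) / Real.sqrt (2 * Real.pi) := by
    apply integral_mono_on hab (gauss_integrable.intervalIntegrable)
      (intervalIntegrable_const)
    intro t ht
    have h1 : a ^ 2 ≤ t ^ 2 := by nlinarith [ht.1]
    have hs : 0 < Real.sqrt (2 * Real.pi) := Real.sqrt_pos.2 (by positivity)
    have h2 : Real.exp (-t ^ 2 / 2) ≤ Real.exp (-a ^ 2 / 2) := Real.exp_le_exp.2 (by linarith)
    exact (div_le_div_iff_of_pos_right hs).2 h2
  rw [intervalIntegral.integral_const, smul_eq_mul] at key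
  exact key

lemma gauss_even (a b : ℝ) :
    (∫ t in (-b)..(-a), Real.exp (-t ^ 2 / 2) / Real.sqrt (2 * Real.pi))
      = ∫ t in a..b, Real.exp (-t ^ 2 / 2) / Real.sqrt (2 * Real.pi) := by
  rw [← intervalIntegral.integral_comp_neg
    (fun t : ℝ => Real.exp (-t ^ 2 / 2) / Real.sqrt (2 * Real.pi))]
  simp [neg_sq]

lemma repr_lemma (p : ℝ) (hp : 0 < p) (x : ℝ) :
    |stdNormalCDF (p * x) - stdNormalCDF x|
      = ∫ t in (min p 1 * |x|)..(max p 1 * |x|),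
          Real.exp (-t ^ 2 / 2) / Real.sqrt (2 * Real.pi) := by
  have hnn : ∀ u v : ℝ, u ≤ v →
      0 ≤ ∫ t in u..v, Real.exp (-t ^ 2 / 2) / Real.sqrt (2 * Real.pi) := by
    intro u v huv
    apply intervalIntegral.integral_nonneg huv
    intro t _
    positivity
  rcases lt_trichotomy x 0 with hx | hx | hx
  · rw [abs_of_neg hx]
    rcases le_total 1 p with h1 | h1
    · have hle : p * x ≤ x := by nlinarith
      rw [abs_sub_comm, abs_of_nonneg (by rw [cdf_diff]; exact hnn _ _ hle), cdf_diff,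
        min_eq_right h1, max_eq_left h1]
      rw [show (1 : ℝ) * -x = -x by ring, show p * -x = -(p * x) by ring, gauss_even]
    · have hle : x ≤ p * x := by nlinarith
      rw [abs_of_nonneg (by rw [cdf_diff]; exact hnn _ _ hle), cdf_diff,
        min_eq_left h1, max_eq_right h1]
      rw [show p * -x = -(p * x) by ring, show (1 : ℝ) * -x = -x by ring, gauss_even]
  · simp [hx]
  · rw [abs_of_pos hx]
    rcases le_total 1 p with h1 | h1
    · have hle : x ≤ p * x := by nlinarith
      rw [abs_of_nonneg (by rw [cdf_diff]; exact hnn _ _ hle), cdf_diff,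
        min_eq_right h1, max_eq_left h1, one_mul]
    · have hle : p * x ≤ x := by nlinarith
      rw [abs_sub_comm, abs_of_nonneg (by rw [cdf_diff]; exact hnn _ _ hle), cdf_diff,
        min_eq_left h1, max_eq_right h1, one_mul]

lemma claimA (p : ℝ) (hp : 0 < p) (x : ℝ) :
    |stdNormalCDF (p * x) - stdNormalCDF x|
      ≤ (max p p⁻¹ - 1) / Real.sqrt (2 * Real.pi * Real.exp 1) := by
  rw [repr_lemma p hp x]
  set m := min p 1 with hm
  set M := max p 1 with hM
  have hm0 : 0 < m := lt_min hp one_pos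
  have hmM : m ≤ M := min_le_of_left_le (le_max_left _ _)
  have ha : (0:ℝ) ≤ m * |x| := by positivity
  have hab : m * |x| ≤ M * |x| := by
    exact mul_le_mul_of_nonneg_right hmM (abs_nonneg x)
  refine (core2 _ _ ha hab).trans ?_
  set a := m * |x| with hadef
  have hs : 0 < Real.sqrt (2 * Real.pi) := Real.sqrt_pos.2 (by positivity)
  -- a * exp(-a^2/2) ≤ exp(-1/2)
  have hkey : a * Real.exp (-a ^ 2 / 2) ≤ Real.exp (-(1:ℝ)/2) := by
    have h1 : a ≤ Real.exp ((a ^ 2 - 1) / 2) := by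
      have := Real.add_one_le_exp ((a ^ 2 - 1) / 2)
      nlinarith [sq_nonneg (a - 1)]
    calc a * Real.exp (-a ^ 2 / 2) ≤ Real.exp ((a ^ 2 - 1) / 2) * Real.exp (-a ^ 2 / 2) :=
          mul_le_mul_of_nonneg_right h1 (Real.exp_pos _).le
      _ = Real.exp (-(1:ℝ)/2) := by rw [← Real.exp_add]; ring_nf
  -- (M*|x| - m*|x|) = ((M-m)/m) * a
  have hMm : max p p⁻¹ - 1 = (M - m) / m := by
    rcases le_total 1 p with h1 | h1
    · have hc : p * p⁻¹ = 1 := mul_inv_cancel₀ hp.ne'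
      have hpinv : p⁻¹ ≤ p := by nlinarith
      rw [hM, hm, max_eq_left h1, min_eq_right h1, max_eq_left hpinv]
      simp
    · have hc : p * p⁻¹ = 1 := mul_inv_cancel₀ hp.ne'
      have hpinv : p ≤ p⁻¹ := by nlinarith
      rw [hM, hm, max_eq_right h1, min_eq_left h1, max_eq_right hpinv]
      field_simp
  have hdiff : M * |x| - m * |x| = (M - m) / m * a := by
    rw [hadef]; field_simp
  rw [hdiff, hMm]
  have hse : Real.sqrt (2 * Real.pi * Real.exp 1) = Real.sqrt (2 * Real.pi) * Real.exp ((1:ℝ)/2) := by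
    rw [Real.sqrt_mul (by positivity), Real.exp_half]
  rw [hse]
  have hMm0 : 0 ≤ (M - m) / m := div_nonneg (by linarith) hm0.le
  have estep : (M - m) / m * a * (Real.exp (-a ^ 2 / 2) / Real.sqrt (2 * Real.pi))
      = (M - m) / m * (a * Real.exp (-a ^ 2 / 2)) / Real.sqrt (2 * Real.pi) := by ring
  rw [estep]
  rw [div_le_div_iff₀ (by positivity) (by positivity)]
  have hexp : Real.exp (-(1:ℝ)/2) * Real.exp ((1:ℝ)/2) = 1 := by
    rw [← Real.exp_add]; norm_num
  calc (M - m) / m * (a * Real.exp (-a ^ 2 / 2)) * (Real.sqrt (2 * Real.pi) * Real.exp (1/2))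
      ≤ (M - m) / m * Real.exp (-(1:ℝ)/2) * (Real.sqrt (2 * Real.pi) * Real.exp (1/2)) := by
        apply mul_le_mul_of_nonneg_right (mul_le_mul_of_nonneg_left hkey hMm0) (by positivity)
    _ = (M - m) / m * Real.sqrt (2 * Real.pi) := by
        rw [show (M - m) / m * Real.exp (-(1:ℝ)/2) * (Real.sqrt (2 * Real.pi) * Real.exp (1/2))
          = (M - m) / m * Real.sqrt (2 * Real.pi) * (Real.exp (-(1:ℝ)/2) * Real.exp ((1:ℝ)/2)) by ring, hexp, mul_one]

lemma claimB (p : ℝ) (hp : 0 < p) (hne : p ≠ 1) (x : ℝ) :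
    |stdNormalCDF (p * x) - stdNormalCDF x|
      ≤ Real.sqrt |Real.log p| / (2 * Real.sqrt Real.pi) := by
  have hL : 0 < |Real.log p| := by
    rw [abs_pos]
    intro h
    rcases Real.log_eq_zero.1 h with h' | h' | h' <;> simp_all <;> linarith
  rcases eq_or_ne x 0 with hx | hx
  · rw [hx]
    simp only [mul_zero, sub_self, abs_zero]
    positivity
  · rw [repr_lemma p hp x]
    set L := |Real.log p| with hLdef
    set l := 1 / (2 * Real.sqrt Real.pi * Real.sqrt L) with hldef
    have hA : 0 < Real.sqrt Real.pi := Real.sqrt_pos.2 Real.pi_pos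
    have hB : 0 < Real.sqrt L := Real.sqrt_pos.2 hL
    have hl : 0 < l := by positivity
    have hm0 : 0 < min p 1 := lt_min hp one_pos
    have hM0 : 0 < max p 1 := lt_of_lt_of_le hp (le_max_left _ _)
    have hxa : 0 < |x| := abs_pos.2 hx
    have ha : 0 < min p 1 * |x| := by positivity
    have hab : min p 1 * |x| ≤ max p 1 * |x| :=
      mul_le_mul_of_nonneg_right (min_le_of_left_le (le_max_left _ _)) (abs_nonneg x)
    refine (core1 _ _ l ha hab hl).trans ?_
    have hlog : Real.log (max p 1 * |x|) - Real.log (min p 1 * |x|) = L := by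
      rw [Real.log_mul (ne_of_gt hM0) (ne_of_gt hxa), Real.log_mul (ne_of_gt hm0) (ne_of_gt hxa)]
      rcases le_total 1 p with h1 | h1
      · rw [max_eq_left h1, min_eq_right h1, Real.log_one, hLdef,
          abs_of_nonneg (Real.log_nonneg h1)]
        ring
      · rw [max_eq_right h1, min_eq_left h1, Real.log_one, hLdef,
          abs_of_nonpos (Real.log_nonpos hp.le h1)]
        ring
    rw [hlog]
    have hsp : Real.sqrt Real.pi ^ 2 = Real.pi := Real.sq_sqrt Real.pi_pos.le
    have hsl : Real.sqrt L ^ 2 = L := Real.sq_sqrt hL.le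
    set A := Real.sqrt Real.pi
    set B := Real.sqrt L
    have hend : l / 2 * L + 1 / (8 * Real.pi * l) = B / (2 * A) := by
      rw [hldef, ← hsp, ← hsl]
      field_simp
      ring
    rw [hend]

theorem sup_scale_stdNormalCDF (p : ℝ) (hp : 0 < p) (hne : p ≠ 1) :
    (⨆ x : ℝ, |stdNormalCDF (p * x) - stdNormalCDF x|) ≤
      min (Real.sqrt ((p - 1) * Real.log p / Real.pi))
        ((max p p⁻¹ - 1) / Real.sqrt (2 * Real.pi * Real.exp 1)) := by
  have hM1 : 1 ≤ max p p⁻¹ := by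
    rcases le_total 1 p with h1 | h1
    · exact le_trans h1 (le_max_left _ _)
    · refine le_trans ?_ (le_max_right _ _)
      have hc := mul_inv_cancel₀ hp.ne'
      nlinarith [inv_pos.2 hp]
  have hB2nonneg : 0 ≤ (max p p⁻¹ - 1) / Real.sqrt (2 * Real.pi * Real.exp 1) := by
    apply div_nonneg (by linarith)
    positivity
  have hB2 : (⨆ x : ℝ, |stdNormalCDF (p * x) - stdNormalCDF x|)
      ≤ (max p p⁻¹ - 1) / Real.sqrt (2 * Real.pi * Real.exp 1) :=
    Real.iSup_le (claimA p hp) hB2nonneg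
  have hprod : 0 < (p - 1) * Real.log p := by
    rcases lt_or_gt_of_ne hne with h1 | h1
    · exact mul_pos_of_neg_of_neg (by linarith) (Real.log_neg hp h1)
    · exact mul_pos (by linarith) (Real.log_pos h1)
  refine le_min ?_ hB2
  by_cases hc : 1 / 4 ≤ |p - 1|
  · apply Real.iSup_le _ (Real.sqrt_nonneg _)
    intro x
    refine (claimB p hp hne x).trans ?_
    rw [Real.sqrt_div' _ Real.pi_pos.le]
    have habs : (p - 1) * Real.log p = |p - 1| * |Real.log p| := by
      rw [← abs_mul, abs_of_pos hprod]
    have h1 : Real.sqrt |Real.log p| / 2 ≤ Real.sqrt ((p - 1) * Real.log p) := by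
      have h4 : Real.sqrt |Real.log p| / 2 = Real.sqrt (|Real.log p| / 4) := by
        rw [Real.sqrt_div' _ (by norm_num : (0:ℝ) ≤ 4),
          show Real.sqrt 4 = 2 by
            rw [show (4:ℝ) = 2 ^ 2 by norm_num, Real.sqrt_sq (by norm_num : (0:ℝ) ≤ 2)]]
      rw [h4, habs]
      apply Real.sqrt_le_sqrt
      nlinarith [abs_nonneg (Real.log p)]
    calc Real.sqrt |Real.log p| / (2 * Real.sqrt Real.pi)
        = (Real.sqrt |Real.log p| / 2) / Real.sqrt Real.pi := by ring
      _ ≤ Real.sqrt ((p - 1) * Real.log p) / Real.sqrt Real.pi := by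
          apply div_le_div_of_nonneg_right h1
          exact Real.sqrt_nonneg _
  · push_neg at hc
    refine hB2.trans ?_
    rw [Real.le_sqrt hB2nonneg (by positivity)]
    have hsq : Real.sqrt (2 * Real.pi * Real.exp 1) ^ 2 = 2 * Real.pi * Real.exp 1 :=
      Real.sq_sqrt (by positivity)
    rw [div_pow, hsq, div_le_div_iff₀ (by positivity) Real.pi_pos]
    -- (max p p⁻¹ - 1)^2 * π ≤ (p-1) log p * (2 π e)
    have hE : (2:ℝ) ≤ Real.exp 1 := by
      have := Real.add_one_le_exp 1; linarith
    rcases lt_or_gt_of_ne hne with h1 | h1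
    · -- p < 1, 3/4 < p
      have h34 : 3 / 4 < p := by
        have := abs_lt.1 hc; linarith [this.1]
      have hMax : max p p⁻¹ = p⁻¹ := by
        apply max_eq_right
        have hi : 1 ≤ p⁻¹ := by
          have hc := mul_inv_cancel₀ hp.ne'
          nlinarith [inv_pos.2 hp]
        linarith
      have hll : Real.log p ≤ p - 1 := Real.log_le_sub_one_of_pos hp
      have hq : (1 - p) ^ 2 ≤ (p - 1) * Real.log p := by nlinarith
      have hinv : p⁻¹ - 1 = (1 - p) / p := by field_simp
      rw [hMax, hinv, div_pow]
      rw [div_mul_eq_mul_div, div_le_iff₀ (by positivity)]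
      have h9 : (1:ℝ) ≤ 2 * Real.exp 1 * p ^ 2 := by nlinarith
      have hA1 : Real.pi * (1 - p) ^ 2 * 1 ≤ Real.pi * (1 - p) ^ 2 * (2 * Real.exp 1 * p ^ 2) :=
        mul_le_mul_of_nonneg_left h9 (by positivity)
      have hA2 : (2 * Real.pi * Real.exp 1 * p ^ 2) * (1 - p) ^ 2
          ≤ (2 * Real.pi * Real.exp 1 * p ^ 2) * ((p - 1) * Real.log p) :=
        mul_le_mul_of_nonneg_left hq (by positivity)
      nlinarith [hA1, hA2]
    · -- 1 < p < 5/4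
      have h54 : p < 5 / 4 := by
        have := abs_lt.1 hc; linarith [this.2]
      have hMax : max p p⁻¹ = p := by
        apply max_eq_left
        have hi : p⁻¹ ≤ 1 := by
          have hc := mul_inv_cancel₀ hp.ne'
          nlinarith [inv_pos.2 hp]
        linarith
      have hlog2 : p - 1 ≤ p * Real.log p := by
        have h := Real.log_le_sub_one_of_pos (inv_pos.2 hp)
        rw [Real.log_inv] at h
        nlinarith [mul_inv_cancel₀ (ne_of_gt hp)]
      have hlogp0 : 0 ≤ Real.log p := Real.log_nonneg h1.le
      rw [hMax]
      have hc1 : (0:ℝ) ≤ 2 * Real.pi * (p - 1) := by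
        have := Real.pi_pos; nlinarith
      have t1 := mul_le_mul_of_nonneg_left hlog2 hc1
      have t2 : p * Real.log p ≤ 5 / 4 * Real.log p :=
        mul_le_mul_of_nonneg_right h54.le hlogp0
      have t3 := mul_le_mul_of_nonneg_left t2 hc1
      have hc2 : (0:ℝ) ≤ Real.pi * (p - 1) * Real.log p :=
        mul_nonneg (mul_nonneg Real.pi_pos.le (by linarith)) hlogp0
      have t4 := mul_le_mul_of_nonneg_left hE hc2
      nlinarith [t1, t3, t4]
end

section
/- Let X be a real random variable with E|X|^{2+δ} < ∞ for some δ ∈ (0,1], and set a := EX, β_r := E|X|^r. Then E|X - a|^{2+δ} ≤ β_{2+δ} + 3.25 · β_2 · |a|^δ ≤ 4.25 · β_{2+δ}. -/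
open MeasureTheory

open scoped NNReal ENNReal

lemma aux_rpow_subadd {p : ℝ} (hp0 : 0 ≤ p) (hp1 : p ≤ 1) {x y : ℝ} (hx : 0 ≤ x) (hy : 0 ≤ y) :
    (x + y) ^ p ≤ x ^ p + y ^ p := by
  have h := NNReal.rpow_add_le_add_rpow x.toNNReal y.toNNReal hp0 hp1
  have hc : ((x.toNNReal + y.toNNReal : ℝ≥0) : ℝ) = x + y := by
    push_cast [Real.coe_toNNReal _ hx, Real.coe_toNNReal _ hy]; ring
  calc (x + y) ^ p = ((x.toNNReal + y.toNNReal : ℝ≥0) : ℝ) ^ p := by rw [hc]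
    _ = (((x.toNNReal + y.toNNReal) ^ p : ℝ≥0) : ℝ) := by rw [NNReal.coe_rpow]
    _ ≤ ((x.toNNReal ^ p + y.toNNReal ^ p : ℝ≥0) : ℝ) := by exact_mod_cast h
    _ = x ^ p + y ^ p := by
        push_cast [NNReal.coe_rpow, Real.coe_toNNReal _ hx, Real.coe_toNNReal _ hy]; ring

lemma aux_lyapunov {Ω : Type*} [MeasureSpace Ω] [IsProbabilityMeasure (volume : Measure Ω)]
    {g : Ω → ℝ} (hg : Measurable g) (hnn : ∀ ω, 0 ≤ g ω) {p q : ℝ}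
    (hp : 0 < p) (hpq : p ≤ q) (hq : Integrable (fun ω => g ω ^ q)) :
    (∫ ω, g ω ^ p) ≤ (∫ ω, g ω ^ q) ^ (p / q) := by
  rcases eq_or_lt_of_le hpq with rfl | hlt
  · rw [div_self hp.ne', Real.rpow_one]
  have hq0 : 0 < q := hp.trans hlt
  have hng : ∀ r : ℝ, (fun ω => ‖g ω‖ ^ r) = fun ω => g ω ^ r :=
    fun r => funext fun ω => by rw [Real.norm_of_nonneg (hnn ω)]
  have hMemq : MemLp g (ENNReal.ofReal q) := by
    have h1 : MemLp (fun ω => ‖g ω‖ ^ (ENNReal.ofReal q).toReal)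
        (ENNReal.ofReal q / ENNReal.ofReal q) ↔ MemLp g (ENNReal.ofReal q) :=
      memLp_norm_rpow_iff hg.aestronglyMeasurable (by simp [hq0]) (by simp)
    rw [ENNReal.div_self (by simp [hq0]) (by simp), ENNReal.toReal_ofReal hq0.le,
      hng q, memLp_one_iff_integrable] at h1
    exact h1.1 hq
  have hMem : MemLp (fun ω => g ω ^ p) (ENNReal.ofReal (q / p)) := by
    have h2 := hMemq.norm_rpow_div (ENNReal.ofReal p)
    rwa [ENNReal.toReal_ofReal hp.le, ← ENNReal.ofReal_div_of_pos hp, hng p] at h2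
  have hconj : (q / p).HolderConjugate ((q/p) / (q/p - 1)) :=
    Real.HolderConjugate.conjExponent (by rw [lt_div_iff₀ hp]; linarith)
  have hH := integral_mul_le_Lp_mul_Lq_of_nonneg hconj (μ := volume)
    (f := fun ω => g ω ^ p) (g := fun _ => (1:ℝ))
    (ae_of_all _ fun ω => Real.rpow_nonneg (hnn ω) p) (ae_of_all _ fun _ => zero_le_one)
    hMem (memLp_const 1)
  simp only [mul_one, Real.one_rpow] at hH
  rw [integral_const, probReal_univ] at hH
  simp only [ENNReal.toReal_one, smul_eq_mul, one_mul, Real.one_rpow, mul_one] at hH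
  have heq : (fun ω => (g ω ^ p) ^ (q / p)) = fun ω => g ω ^ q := funext fun ω => by
    rw [← Real.rpow_mul (hnn ω)]; congr 1; field_simp
  rw [heq, one_div_div] at hH
  exact hH

theorem central_moment_le (Ω : Type*) [MeasureSpace Ω]
    [IsProbabilityMeasure (volume : Measure Ω)] (X : Ω → ℝ) (hX : Measurable X)
    (δ : ℝ) (h0 : 0 < δ) (h1 : δ ≤ 1)
    (hint : Integrable (fun ω => |X ω| ^ ((2 : ℝ) + δ))) :
    (∫ ω, |X ω - ∫ ω', X ω'| ^ ((2 : ℝ) + δ)) ≤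
        (∫ ω, |X ω| ^ ((2 : ℝ) + δ)) + 3.25 * (∫ ω, |X ω| ^ (2 : ℕ)) * |∫ ω', X ω'| ^ δ ∧
      (∫ ω, |X ω| ^ ((2 : ℝ) + δ)) + 3.25 * (∫ ω, |X ω| ^ (2 : ℕ)) * |∫ ω', X ω'| ^ δ ≤
        4.25 * ∫ ω, |X ω| ^ ((2 : ℝ) + δ) := by
  have mom_int : ∀ r : ℝ, 0 < r → r ≤ 2 + δ → Integrable (fun ω => |X ω| ^ r) := by
    intro r hr hr2
    refine Integrable.mono ((integrable_const (1:ℝ)).add hint)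
      (Measurable.aestronglyMeasurable (by fun_prop)) (ae_of_all _ fun ω => ?_)
    simp only [Pi.add_apply]
    have h2 : (0:ℝ) ≤ 1 + |X ω| ^ ((2:ℝ) + δ) := by positivity
    rw [Real.norm_of_nonneg (Real.rpow_nonneg (abs_nonneg _) r), Real.norm_of_nonneg h2]
    rcases le_total (|X ω|) 1 with h | h
    · have := Real.rpow_le_one (abs_nonneg _) h hr.le
      have := Real.rpow_nonneg (abs_nonneg (X ω)) ((2:ℝ) + δ)
      linarith
    · have := Real.rpow_le_rpow_of_exponent_le h hr2
      linarith
  have p2 : ∀ x : ℝ, |x| ^ ((2:ℝ)) = |x| ^ (2:ℕ) := fun x => by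
    rw [show ((2:ℝ)) = ((2:ℕ):ℝ) by norm_num, Real.rpow_natCast]
  have pow2conv : (fun ω => |X ω| ^ ((2:ℝ))) = fun ω => |X ω| ^ (2:ℕ) :=
    funext fun ω => p2 _
  have intX : Integrable X := by
    refine (mom_int 1 one_pos (by linarith)).mono hX.aestronglyMeasurable
      (ae_of_all _ fun ω => ?_)
    simp [Real.rpow_one]
  have intSq : Integrable (fun ω => X ω ^ 2) := by
    refine (mom_int 2 two_pos (by linarith)).mono
      (Measurable.aestronglyMeasurable (by fun_prop)) (ae_of_all _ fun ω => ?_)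
    rw [p2]
    simp [Real.norm_eq_abs, abs_pow, abs_abs]
  have intAbsSq : Integrable (fun ω => |X ω| ^ (2:ℕ)) := by
    rw [← pow2conv]; exact mom_int 2 two_pos (by linarith)
  have intXδ : Integrable (fun ω => X ω * |X ω| ^ δ) := by
    refine (mom_int (1 + δ) (by linarith) (by linarith)).mono
      (Measurable.aestronglyMeasurable (by fun_prop)) (ae_of_all _ fun ω => ?_)
    rw [Real.norm_of_nonneg (Real.rpow_nonneg (abs_nonneg _) _), Real.norm_eq_abs, abs_mul,
      abs_of_nonneg (Real.rpow_nonneg (abs_nonneg _) δ),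
      Real.rpow_add' (abs_nonneg _) (by positivity), Real.rpow_one]
  have intδ : Integrable (fun ω => |X ω| ^ δ) := mom_int δ h0 (by linarith)
  set a := ∫ ω', X ω' with ha
  set A := ∫ ω, |X ω| ^ ((2:ℝ) + δ) with hA
  set B := ∫ ω, |X ω| ^ (2:ℕ) with hB
  have hAnn : 0 ≤ A := integral_nonneg fun ω => Real.rpow_nonneg (abs_nonneg _) _
  have hBnn : 0 ≤ B := integral_nonneg fun ω => pow_nonneg (abs_nonneg _) _
  have habs2δ : ∀ x : ℝ, |x| ^ ((2:ℝ) + δ) = |x| ^ δ * x ^ 2 := fun x => by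
    rw [show (2:ℝ) + δ = δ + 2 by ring, Real.rpow_add' (abs_nonneg _) (by positivity),
      show ((2:ℝ)) = ((2:ℕ):ℝ) by norm_num, Real.rpow_natCast, sq_abs, mul_comm]
  have hkey : ∀ ω, |X ω - a| ^ ((2:ℝ) + δ) ≤ (|X ω| ^ δ + |a| ^ δ) * (X ω - a) ^ 2 := by
    intro ω
    rw [habs2δ (X ω - a)]
    have e2 : |X ω - a| ^ δ ≤ |X ω| ^ δ + |a| ^ δ := by
      calc |X ω - a| ^ δ ≤ (|X ω| + |a|) ^ δ :=
            Real.rpow_le_rpow (abs_nonneg _) (abs_sub _ _) h0.le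
        _ ≤ |X ω| ^ δ + |a| ^ δ := aux_rpow_subadd h0.le h1 (abs_nonneg _) (abs_nonneg _)
    exact mul_le_mul_of_nonneg_right e2 (sq_nonneg _)
  have hdec : (fun ω => (|X ω| ^ δ + |a| ^ δ) * (X ω - a) ^ 2)
      = fun ω => |X ω| ^ ((2:ℝ) + δ) + -(2*a) * (X ω * |X ω| ^ δ)
          + a^2 * |X ω| ^ δ + |a| ^ δ * X ω ^ 2 + -(2*a*|a|^δ) * X ω + |a|^δ * a^2 :=
    funext fun ω => by rw [habs2δ (X ω)]; ring
  have I2 : Integrable (fun ω => -(2*a) * (X ω * |X ω| ^ δ)) := intXδ.const_mul _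
  have I3 : Integrable (fun ω => a^2 * |X ω| ^ δ) := intδ.const_mul _
  have I4 : Integrable (fun ω => |a| ^ δ * X ω ^ 2) := intSq.const_mul _
  have I5 : Integrable (fun ω => -(2*a*|a|^δ) * X ω) := intX.const_mul _
  have I12 : Integrable (fun ω => |X ω| ^ ((2:ℝ)+δ) + -(2*a) * (X ω * |X ω| ^ δ)) :=
    hint.add I2
  have I123 : Integrable (fun ω => |X ω| ^ ((2:ℝ)+δ) + -(2*a) * (X ω * |X ω| ^ δ)
      + a^2 * |X ω| ^ δ) := I12.add I3
  have I1234 : Integrable (fun ω => |X ω| ^ ((2:ℝ)+δ) + -(2*a) * (X ω * |X ω| ^ δ)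
      + a^2 * |X ω| ^ δ + |a| ^ δ * X ω ^ 2) := I123.add I4
  have I12345 : Integrable (fun ω => |X ω| ^ ((2:ℝ)+δ) + -(2*a) * (X ω * |X ω| ^ δ)
      + a^2 * |X ω| ^ δ + |a| ^ δ * X ω ^ 2 + -(2*a*|a|^δ) * X ω) := I1234.add I5
  have intG : Integrable (fun ω => (|X ω| ^ δ + |a| ^ δ) * (X ω - a) ^ 2) := by
    rw [hdec]; exact I12345.add (integrable_const _)
  have intLHS : Integrable (fun ω => |X ω - a| ^ ((2:ℝ) + δ)) := by
    refine intG.mono (Measurable.aestronglyMeasurable (by fun_prop))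
      (ae_of_all _ fun ω => ?_)
    rw [Real.norm_of_nonneg (Real.rpow_nonneg (abs_nonneg _) _)]
    exact le_trans (hkey ω) (le_abs_self _)
  have step1 : (∫ ω, |X ω - a| ^ ((2:ℝ) + δ)) ≤
      ∫ ω, (|X ω| ^ δ + |a| ^ δ) * (X ω - a) ^ 2 :=
    integral_mono intLHS intG hkey
  set c := ∫ ω, X ω * |X ω| ^ δ with hc
  set bδ := ∫ ω, |X ω| ^ δ with hbδ
  have sqconv : (fun ω => X ω ^ 2) = fun ω => |X ω| ^ (2:ℕ) := funext fun ω => (sq_abs _).symm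
  have step2 : (∫ ω, (|X ω| ^ δ + |a| ^ δ) * (X ω - a) ^ 2)
      = A + -(2*a) * c + a^2 * bδ + |a|^δ * B + -(2*a*|a|^δ) * a + |a|^δ * a^2 := by
    rw [hdec, integral_add I12345 (integrable_const _), integral_add I1234 I5,
      integral_add I123 I4, integral_add I12 I3, integral_add hint I2,
      integral_const]
    simp only [integral_const_mul, probReal_univ, ENNReal.toReal_one, smul_eq_mul, one_mul]
    rw [show (∫ ω, X ω ^ 2) = B by rw [sqconv]]
  -- Lyapunov-type bounds
  have habs_nn : ∀ ω : Ω, (0:ℝ) ≤ |X ω| := fun ω => abs_nonneg _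
  have int2r : Integrable (fun ω => |X ω| ^ ((2:ℝ))) := by
    rw [pow2conv]; exact intAbsSq
  have hB2r : (∫ ω, |X ω| ^ ((2:ℝ))) = B := by rw [pow2conv]
  set s := Real.sqrt B with hs
  have hsnn : 0 ≤ s := Real.sqrt_nonneg _
  have hs2 : s ^ 2 = B := Real.sq_sqrt hBnn
  have hsB : s = B ^ ((1:ℝ)/2) := Real.sqrt_eq_rpow B
  have hBrpow : ∀ t : ℝ, B ^ (t/2) = s ^ t := fun t => by
    rw [hsB, ← Real.rpow_mul hBnn]; congr 1; ring
  have hu : (0:ℝ) ≤ |a| := abs_nonneg a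
  have hb1δ : (∫ ω, |X ω| ^ (1+δ)) ≤ s ^ (1+δ) := by
    have h := aux_lyapunov hX.abs habs_nn (p := 1+δ) (q := 2) (by linarith) (by linarith) int2r
    rwa [hB2r, hBrpow] at h
  have hbδs : bδ ≤ s ^ δ := by
    have h := aux_lyapunov hX.abs habs_nn (p := δ) (q := 2) h0 (by linarith) int2r
    rwa [hB2r, hBrpow] at h
  have habs1conv : (fun ω => |X ω| ^ ((1:ℝ))) = fun ω => |X ω| :=
    funext fun ω => Real.rpow_one _
  have ha1 : |a| ≤ ∫ ω, |X ω| := by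
    rw [ha]
    have h := norm_integral_le_integral_norm (μ := volume) X
    simpa [Real.norm_eq_abs] using h
  have ha_s : |a| ≤ s := by
    have h2 := aux_lyapunov hX.abs habs_nn (p := 1) (q := 2) one_pos one_le_two int2r
    rw [hB2r, habs1conv] at h2
    calc |a| ≤ ∫ ω, |X ω| := ha1
      _ ≤ B ^ ((1:ℝ)/2) := h2
      _ = s := by rw [hBrpow 1, Real.rpow_one]
  have hcb : |c| ≤ ∫ ω, |X ω| ^ (1+δ) := by
    rw [hc]
    have h := norm_integral_le_integral_norm (μ := volume) (fun ω => X ω * |X ω| ^ δ)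
    simp only [Real.norm_eq_abs] at h
    refine h.trans (le_of_eq (integral_congr_ae (ae_of_all _ fun ω => ?_)))
    show |X ω * |X ω| ^ δ| = |X ω| ^ (1+δ)
    rw [abs_mul, abs_of_nonneg (Real.rpow_nonneg (abs_nonneg _) δ),
      Real.rpow_add' (abs_nonneg _) (by positivity), Real.rpow_one]
  have hAbound : |a| * (∫ ω, |X ω| ^ (1+δ)) ≤ |a|^δ * B := by
    have e1 : |a| = |a|^δ * |a|^(1-δ) := by
      have h' : δ + (1 - δ) = 1 := by ring
      rw [← Real.rpow_add' hu (by rw [h']; norm_num), h', Real.rpow_one]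
    calc |a| * (∫ ω, |X ω| ^ (1+δ)) ≤ |a| * s^(1+δ) :=
          mul_le_mul_of_nonneg_left hb1δ hu
      _ = |a|^δ * (|a|^(1-δ) * s^(1+δ)) := by rw [← mul_assoc, ← e1]
      _ ≤ |a|^δ * (s^(1-δ) * s^(1+δ)) := by
          refine mul_le_mul_of_nonneg_left (mul_le_mul_of_nonneg_right
            (Real.rpow_le_rpow hu ha_s (by linarith)) (Real.rpow_nonneg hsnn _))
            (Real.rpow_nonneg hu δ)
      _ = |a|^δ * B := by
          have h'' : (1-δ) + (1+δ) = 2 := by ring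
          rw [← Real.rpow_add' hsnn (by rw [h'']; norm_num), h'',
            show ((2:ℝ)) = ((2:ℕ):ℝ) by norm_num, Real.rpow_natCast, hs2]
  have hBbound : a^2*bδ - |a|^δ*a^2 ≤ 0.25*B*|a|^δ := by
    have ea : a^2 = |a|^(2:ℕ) := (sq_abs a).symm
    have e3 : (|a|:ℝ)^(2:ℕ) = |a|^δ * |a|^(2-δ) := by
      rw [← Real.rpow_natCast |a| 2, show ((2:ℕ):ℝ) = δ + (2-δ) by push_cast; ring,
        Real.rpow_add' hu (show δ + (2-δ) ≠ 0 by intro hh; linarith)]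
    have e4 : |a|^(2-δ) * s^δ ≤ |a| * s := by
      have h' : (1:ℝ) + (1-δ) = 2-δ := by ring
      have h1δ : (1:ℝ) + (1-δ) ≠ 0 := by intro hh; linarith
      rw [← h', Real.rpow_add' hu h1δ, Real.rpow_one]
      calc |a| * |a|^(1-δ) * s^δ ≤ |a| * s^(1-δ) * s^δ := by
            refine mul_le_mul_of_nonneg_right (mul_le_mul_of_nonneg_left
              (Real.rpow_le_rpow hu ha_s (by linarith)) hu) (Real.rpow_nonneg hsnn δ)
        _ = |a| * s := by
            have h'' : (1-δ) + δ = 1 := by ring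
            rw [mul_assoc, ← Real.rpow_add' hsnn (by rw [h'']; norm_num), h'', Real.rpow_one]
    have e5 : a^2 * bδ ≤ |a|^δ * (|a| * s) := by
      calc a^2 * bδ ≤ a^2 * s^δ := mul_le_mul_of_nonneg_left hbδs (sq_nonneg a)
        _ = |a|^δ * (|a|^(2-δ) * s^δ) := by rw [ea, e3]; ring
        _ ≤ |a|^δ * (|a| * s) := mul_le_mul_of_nonneg_left e4 (Real.rpow_nonneg hu δ)
    have e6 : |a| * s - |a|^(2:ℕ) ≤ s^2/4 := by nlinarith [sq_nonneg (s - 2*|a|)]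
    have e7 : |a| ^ δ * (|a| * s) - |a| ^ δ * (|a| ^ (2:ℕ)) ≤ |a| ^ δ * (s^2/4) := by
      rw [← mul_sub]; exact mul_le_mul_of_nonneg_left e6 (Real.rpow_nonneg hu δ)
    rw [ea, ← hs2]
    rw [ea] at e5
    linarith [e5, e7]
  have hCbound : -(2*a)*c ≤ 2*(|a| * ∫ ω, |X ω| ^ (1+δ)) := by
    calc -(2*a)*c ≤ |(-(2*a)) * c| := le_abs_self _
      _ = 2 * (|a| * |c|) := by rw [abs_mul, abs_neg, abs_mul, abs_two]; ring
      _ ≤ 2 * (|a| * ∫ ω, |X ω| ^ (1+δ)) := by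
          refine mul_le_mul_of_nonneg_left (mul_le_mul_of_nonneg_left hcb hu) (by norm_num)
  have hprodA : B * |a|^δ ≤ A := by
    have h2δ0 : (0:ℝ) < 2 + δ := by linarith
    have hL4 : B ≤ A^(2/(2+δ)) := by
      have h := aux_lyapunov hX.abs habs_nn (p := 2) (q := 2+δ) two_pos (by linarith) hint
      rwa [hB2r] at h
    have hL5 : (∫ ω, |X ω| ^ ((1:ℝ))) ≤ A^(1/(2+δ)) :=
      aux_lyapunov hX.abs habs_nn (p := 1) (q := 2+δ) one_pos (by linarith) hint
    rw [habs1conv] at hL5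
    have haδA : |a|^δ ≤ A^(δ/(2+δ)) := by
      calc |a|^δ ≤ (A^(1/(2+δ)))^δ :=
            Real.rpow_le_rpow hu (ha1.trans hL5) h0.le
        _ = A^(δ/(2+δ)) := by rw [← Real.rpow_mul hAnn]; congr 1; ring
    calc B * |a|^δ ≤ A^(2/(2+δ)) * A^(δ/(2+δ)) :=
          mul_le_mul hL4 haδA (Real.rpow_nonneg hu δ) (Real.rpow_nonneg hAnn _)
      _ = A := by
          have h' : 2/(2+δ) + δ/(2+δ) = 1 := by field_simp
          rw [← Real.rpow_add' hAnn (by rw [h']; norm_num), h', Real.rpow_one]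
  constructor
  · calc (∫ ω, |X ω - a| ^ ((2:ℝ) + δ)) ≤
        ∫ ω, (|X ω| ^ δ + |a| ^ δ) * (X ω - a) ^ 2 := step1
      _ = A + -(2*a) * c + a^2 * bδ + |a|^δ * B + -(2*a*|a|^δ) * a + |a|^δ * a^2 := step2
      _ ≤ A + 3.25 * B * |a| ^ δ := by linarith [hAbound, hBbound, hCbound]
  · linarith [hprodA, hAnn]
end

section
/- For any x > 0 and s ∈ [0,1], (x/(x+s))^{1-s} ≤ Γ(x+s)/(x^s Γ(x)) ≤ 1. -/
theorem wendel_inequality (x s : ℝ) (hx : 0 < x) (hs0 : 0 ≤ s) (hs1 : s ≤ 1) :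
    (x / (x + s)) ^ (1 - s) ≤ Real.Gamma (x + s) / (x ^ s * Real.Gamma x) ∧
      Real.Gamma (x + s) / (x ^ s * Real.Gamma x) ≤ 1 := by
  have hΓx := Real.Gamma_pos_of_pos hx
  have hxs : 0 < x + s := by linarith
  have hΓxs := Real.Gamma_pos_of_pos hxs
  rcases eq_or_lt_of_le hs0 with h0 | h0
  · simp [← h0, Real.rpow_zero, Real.rpow_one, div_self hx.ne', div_self hΓx.ne']
  rcases eq_or_lt_of_le hs1 with h1 | h1
  · subst h1
    rw [Real.Gamma_add_one hx.ne', Real.rpow_one, sub_self, Real.rpow_zero,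
      div_self (by positivity)]
    exact ⟨le_refl 1, le_refl 1⟩
  -- main case 0 < s < 1
  have hs' : 0 < 1 - s := by linarith
  -- Upper bound
  have key1 := Real.Gamma_mul_add_mul_le_rpow_Gamma_mul_rpow_Gamma hx
    (by linarith : (0:ℝ) < x + 1) hs' h0 (by ring)
  have e1 : (1 - s) * x + s * (x + 1) = x + s := by ring
  rw [e1, Real.Gamma_add_one hx.ne',
    Real.mul_rpow hx.le hΓx.le] at key1
  have e2 : Real.Gamma x ^ (1 - s) * (x ^ s * Real.Gamma x ^ s)
      = x ^ s * Real.Gamma x := by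
    rw [mul_left_comm, ← Real.rpow_add hΓx]
    norm_num
  rw [e2] at key1
  -- Lower bound
  have key2 := Real.Gamma_mul_add_mul_le_rpow_Gamma_mul_rpow_Gamma hxs
    (by linarith : (0:ℝ) < x + s + 1) h0 hs' (by ring)
  have e3 : s * (x + s) + (1 - s) * (x + s + 1) = x + 1 := by ring
  rw [e3, Real.Gamma_add_one hx.ne', Real.Gamma_add_one hxs.ne',
    Real.mul_rpow hxs.le hΓxs.le] at key2
  have e4 : Real.Gamma (x + s) ^ s * ((x + s) ^ (1 - s) * Real.Gamma (x + s) ^ (1 - s))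
      = (x + s) ^ (1 - s) * Real.Gamma (x + s) := by
    rw [mul_left_comm, ← Real.rpow_add hΓxs]
    norm_num
  rw [e4] at key2
  constructor
  · rw [Real.div_rpow hx.le hxs.le, div_le_div_iff₀ (by positivity) (by positivity)]
    calc x ^ (1 - s) * (x ^ s * Real.Gamma x) = x ^ ((1 - s) + s) * Real.Gamma x := by
          rw [Real.rpow_add hx]; ring
      _ = x * Real.Gamma x := by norm_num
      _ ≤ (x + s) ^ (1 - s) * Real.Gamma (x + s) := key2
      _ = Real.Gamma (x + s) * (x + s) ^ (1 - s) := mul_comm _ _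
  · rw [div_le_one (by positivity)]
    exact key1
end

section
/- Let ξ_1, …, ξ_n be independent Bernoulli random variables with P(ξ_i = 1) = p_i = 1 - P(ξ_i = 0), set λ = ∑ p_i and let N_λ be Poisson distributed with parameter λ. Then sup_{B ⊆ ℕ} |P(∑_{i=1}^n ξ_i ∈ B) - P(N_λ ∈ B)| ≤ ∑_{i=1}^n p_i². -/
open MeasureTheory ProbabilityTheory Finset

noncomputable section PoissonAux
namespace PoissonAux

def pconv (f g : ℕ → ℝ) (k : ℕ) : ℝ := ∑ i ∈ Finset.range (k+1), f i * g (k - i)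

def poi (l : ℝ) (k : ℕ) : ℝ := Real.exp (-l) * l ^ k / k.factorial

def bern (p : ℝ) (k : ℕ) : ℝ := if k = 0 then 1 - p else if k = 1 then p else 0

def ldist (f g : ℕ → ℝ) : ℝ := ∑' k, |f k - g k|

structure IsPMF (f : ℕ → ℝ) : Prop where
  nonneg : ∀ k, 0 ≤ f k
  summable : Summable f
  tsum_eq : ∑' k, f k = 1

lemma exp_tsum (x : ℝ) : ∑' n : ℕ, x ^ n / n.factorial = Real.exp x := by
  rw [Real.exp_eq_exp_ℝ, NormedSpace.exp_eq_tsum_div]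

lemma poi_pmf {l : ℝ} (hl : 0 ≤ l) : IsPMF (poi l) := by
  refine ⟨fun k => ?_, ?_, ?_⟩
  · exact div_nonneg (mul_nonneg (Real.exp_pos _).le (pow_nonneg hl _)) (Nat.cast_nonneg _)
  · have : Summable (fun k : ℕ => l ^ k / k.factorial) := Real.summable_pow_div_factorial l
    have h2 := this.mul_left (Real.exp (-l))
    refine h2.congr fun k => ?_
    simp [poi, mul_div_assoc]
  · simp only [poi, mul_div_assoc]
    rw [tsum_mul_left, exp_tsum, ← Real.exp_add]
    simp

lemma bern_pmf {p : ℝ} (h0 : 0 ≤ p) (h1 : p ≤ 1) : IsPMF (bern p) := by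
  have hsupp : ∀ k ∉ ({0, 1} : Finset ℕ), bern p k = 0 := by
    intro k hk
    simp only [Finset.mem_insert, Finset.mem_singleton, not_or] at hk
    simp [bern, hk.1, hk.2]
  refine ⟨fun k => ?_, summable_of_ne_finset_zero hsupp, ?_⟩
  · unfold bern; split <;> [linarith; skip]; split <;> [linarith; exact le_rfl]
  · rw [tsum_eq_sum hsupp]
    norm_num [bern]


lemma abs_eq_self_of_pmf {f : ℕ → ℝ} (hf : IsPMF f) : (fun k => ‖f k‖) = f := by
  funext k; rw [Real.norm_eq_abs, abs_of_nonneg (hf.nonneg k)]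

lemma pconv_summable {f g : ℕ → ℝ} (hf : IsPMF f) (hg : IsPMF g) :
    Summable (pconv f g) := by
  have := summable_norm_sum_mul_range_of_summable_norm
    (f := f) (g := g) (by rw [abs_eq_self_of_pmf hf]; exact hf.summable)
    (by rw [abs_eq_self_of_pmf hg]; exact hg.summable)
  exact this.of_norm

lemma pconv_tsum {f g : ℕ → ℝ} (hf : IsPMF f) (hg : IsPMF g) :
    ∑' k, pconv f g k = (∑' k, f k) * (∑' k, g k) :=
  (tsum_mul_tsum_eq_tsum_sum_range_of_summable_norm
    (by rw [abs_eq_self_of_pmf hf]; exact hf.summable)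
    (by rw [abs_eq_self_of_pmf hg]; exact hg.summable)).symm

lemma pconv_pmf {f g : ℕ → ℝ} (hf : IsPMF f) (hg : IsPMF g) : IsPMF (pconv f g) := by
  refine ⟨fun k => Finset.sum_nonneg fun i _ => mul_nonneg (hf.nonneg i) (hg.nonneg _),
    pconv_summable hf hg, ?_⟩
  rw [pconv_tsum hf hg, hf.tsum_eq, hg.tsum_eq, one_mul]

lemma pconv_comm (f g : ℕ → ℝ) : pconv f g = pconv g f := by
  funext k
  unfold pconv
  rw [← Finset.sum_range_reflect]
  refine Finset.sum_congr rfl fun i hi => ?_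
  rw [Finset.mem_range] at hi
  have h1 : k + 1 - 1 - i = k - i := by omega
  have h2 : k - (k - i) = i := by omega
  rw [h1, h2, mul_comm]

lemma ldist_summable {f g : ℕ → ℝ} (hf : IsPMF f) (hg : IsPMF g) :
    Summable (fun k => |f k - g k|) := by
  refine Summable.of_nonneg_of_le (fun k => abs_nonneg _) (fun k => ?_)
    (hf.summable.add hg.summable)
  have := abs_sub_abs_le_abs_sub (f k) (g k)
  calc |f k - g k| ≤ |f k| + |g k| := abs_sub _ _
    _ = f k + g k := by
        rw [abs_of_nonneg (hf.nonneg k), abs_of_nonneg (hg.nonneg k)]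

lemma ldist_nonneg (f g : ℕ → ℝ) : 0 ≤ ldist f g :=
  tsum_nonneg fun k => abs_nonneg _

lemma ldist_triangle {f g h : ℕ → ℝ} (hf : IsPMF f) (hg : IsPMF g) (hh : IsPMF h) :
    ldist f h ≤ ldist f g + ldist g h := by
  unfold ldist
  rw [← Summable.tsum_add (ldist_summable hf hg) (ldist_summable hg hh)]
  refine Summable.tsum_le_tsum (fun k => ?_) (ldist_summable hf hh)
    ((ldist_summable hf hg).add (ldist_summable hg hh))
  exact abs_sub_le _ _ _

/-- contraction: convolving with a pmf on the left does not increase L1 distance -/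
lemma ldist_pconv_left {h f g : ℕ → ℝ} (hh : IsPMF h) (hf : IsPMF f) (hg : IsPMF g) :
    ldist (pconv h f) (pconv h g) ≤ ldist f g := by
  set d : ℕ → ℝ := fun k => |f k - g k| with hd
  have hdnn : ∀ k, 0 ≤ d k := fun k => abs_nonneg _
  have hdsum : Summable d := ldist_summable hf hg
  have hdnorm : Summable fun k => ‖d k‖ := by
    refine hdsum.congr fun k => ?_
    rw [Real.norm_eq_abs, abs_of_nonneg (hdnn k)]
  have hhnorm : Summable fun k => ‖h k‖ := by rw [abs_eq_self_of_pmf hh]; exact hh.summable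
  have hconv_sum : Summable fun k => ∑ i ∈ Finset.range (k+1), h i * d (k - i) :=
    (summable_norm_sum_mul_range_of_summable_norm hhnorm hdnorm).of_norm
  have hpt : ∀ k, |pconv h f k - pconv h g k| ≤ ∑ i ∈ Finset.range (k+1), h i * d (k - i) := by
    intro k
    unfold pconv
    rw [← Finset.sum_sub_distrib]
    refine (Finset.abs_sum_le_sum_abs _ _).trans (le_of_eq ?_)
    refine Finset.sum_congr rfl fun i _ => ?_
    rw [← mul_sub, abs_mul, abs_of_nonneg (hh.nonneg i)]
  calc ldist (pconv h f) (pconv h g)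
      ≤ ∑' k, ∑ i ∈ Finset.range (k+1), h i * d (k - i) := by
        refine Summable.tsum_le_tsum hpt ?_ hconv_sum
        exact Summable.of_nonneg_of_le (fun k => abs_nonneg _) hpt hconv_sum
    _ = (∑' k, h k) * (∑' k, d k) :=
        (tsum_mul_tsum_eq_tsum_sum_range_of_summable_norm hhnorm hdnorm).symm
    _ = ldist f g := by rw [hh.tsum_eq, one_mul]; rfl

lemma ldist_pconv_right {h f g : ℕ → ℝ} (hh : IsPMF h) (hf : IsPMF f) (hg : IsPMF g) :
    ldist (pconv f h) (pconv g h) ≤ ldist f g := by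
  rw [pconv_comm f h, pconv_comm g h]
  exact ldist_pconv_left hh hf hg

lemma poi_add (a b : ℝ) : pconv (poi a) (poi b) = poi (a + b) := by
  funext k
  unfold pconv poi
  have : ∀ i ∈ Finset.range (k+1),
      Real.exp (-a) * a ^ i / i.factorial * (Real.exp (-b) * b ^ (k-i) / (k-i).factorial)
      = (Real.exp (-(a+b)) / k.factorial) * (a ^ i * b ^ (k-i) * (k.choose i)) := by
    intro i hi
    rw [Finset.mem_range, Nat.lt_succ_iff] at hi
    have hfac : (k.choose i : ℝ) = k.factorial / (i.factorial * (k-i).factorial) := by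
      rw [eq_div_iff (by positivity)]
      have := Nat.choose_mul_factorial_mul_factorial hi
      exact_mod_cast congrArg (Nat.cast (R := ℝ)) (by rw [← this]; ring)
    rw [hfac]
    have hexp : Real.exp (-(a+b)) = Real.exp (-a) * Real.exp (-b) := by
      rw [← Real.exp_add]; ring_nf
    have h1 : (i.factorial : ℝ) ≠ 0 := by positivity
    have h2 : ((k-i).factorial : ℝ) ≠ 0 := by positivity
    have h3 : (k.factorial : ℝ) ≠ 0 := by positivity
    rw [hexp]
    field_simp
  rw [Finset.sum_congr rfl this, ← Finset.mul_sum]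
  rw [show ∑ i ∈ Finset.range (k+1), a ^ i * b ^ (k-i) * (k.choose i : ℝ) = (a+b)^k from
    (add_pow a b k).symm]
  ring


lemma bern_poi_dist {p : ℝ} (h0 : 0 ≤ p) (h1 : p ≤ 1) :
    ldist (bern p) (poi p) ≤ 2 * p ^ 2 := by
  set E := Real.exp (-p) with hE
  have hE1 : 1 - p ≤ E := by have := Real.add_one_le_exp (-p); linarith
  have hE2 : E ≤ 1 := Real.exp_le_one_iff.mpr (by linarith)
  have hsum : Summable (fun k => |bern p k - poi p k|) :=
    ldist_summable (bern_pmf h0 h1) (poi_pmf h0)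
  have hpsum : Summable (poi p) := (poi_pmf h0).summable
  -- tail of the Poisson pmf
  have hpoi0 : poi p 0 = E := by simp [poi, hE]
  have hpoi1 : poi p 1 = E * p := by simp [poi, hE]
  have htail : ∑' k, poi p (k + 2) = 1 - E - E * p := by
    have e1 : ∑' k, poi p k = poi p 0 + ∑' k, poi p (k + 1) := Summable.tsum_eq_zero_add hpsum
    have e2 : ∑' k, poi p (k + 1) = poi p 1 + ∑' k, poi p (k + 2) := by
      have : Summable fun k => poi p (k + 1) := by
        rw [_root_.summable_nat_add_iff]; exact hpsum
      simpa using Summable.tsum_eq_zero_add this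
    have := (poi_pmf h0).tsum_eq
    rw [e1, e2, hpoi0, hpoi1] at this
    linarith
  have hb0 : bern p 0 = 1 - p := by norm_num [bern]
  have hb1 : bern p 1 = p := by norm_num [bern]
  have ha0 : |bern p 0 - poi p 0| = E - (1 - p) := by
    rw [hpoi0, hb0, abs_of_nonpos (by linarith)]; ring
  have ha1 : |bern p 1 - poi p 1| = p - E * p := by
    rw [hpoi1, hb1, abs_of_nonneg (by nlinarith)]
  have hldist : ldist (bern p) (poi p) = 2 * p * (1 - E) := by
    unfold ldist
    rw [Summable.tsum_eq_zero_add hsum]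
    have hs1 : Summable fun k => |bern p (k + 1) - poi p (k + 1)| :=
      (_root_.summable_nat_add_iff (f := fun k => |bern p k - poi p k|) 1).mpr hsum
    rw [Summable.tsum_eq_zero_add hs1]
    have : ∑' k, |bern p (k + 1 + 1) - poi p (k + 1 + 1)| = ∑' k, poi p (k + 2) := by
      refine tsum_congr fun k => ?_
      have : bern p (k + 1 + 1) = 0 := by simp [bern]
      rw [this, zero_sub, abs_neg, abs_of_nonneg ((poi_pmf h0).nonneg _)]
    rw [this, htail, ha0, ha1]
    ring
  rw [hldist]
  nlinarith

lemma tsum_subtype_le_of_nonneg {f : ℕ → ℝ} (hnn : ∀ k, 0 ≤ f k) (hs : Summable f)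
    (B : Set ℕ) : ∑' k : B, f k ≤ ∑' k, f k := by
  rw [_root_.tsum_subtype]
  refine Summable.tsum_le_tsum (fun k => Set.indicator_le_self' (fun k _ => hnn k) k)
    (hs.indicator B) hs

lemma set_diff_le_ldist {f g : ℕ → ℝ} (hf : IsPMF f) (hg : IsPMF g) (B : Set ℕ) :
    |(∑' k : B, f k) - ∑' k : B, g k| ≤ ldist f g / 2 := by
  set h : ℕ → ℝ := fun k => f k - g k with hh
  have hsub : Summable h := hf.summable.sub hg.summable
  have habs : Summable fun k => |h k| := ldist_summable hf hg
  have hple : ∀ k, max (h k) 0 ≤ |h k| := fun k => max_le (le_abs_self _) (abs_nonneg _)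
  have hnle : ∀ k, max (-h k) 0 ≤ |h k| := fun k => max_le (neg_le_abs _) (abs_nonneg _)
  have hpos : Summable fun k => max (h k) 0 :=
    Summable.of_nonneg_of_le (fun k => le_max_right _ _) hple habs
  have hneg : Summable fun k => max (-h k) 0 :=
    Summable.of_nonneg_of_le (fun k => le_max_right _ _) hnle habs
  have hzero : (∑' k, max (h k) 0) - ∑' k, max (-h k) 0 = 0 := by
    rw [← Summable.tsum_sub hpos hneg]
    have : ∀ k, max (h k) 0 - max (-h k) 0 = h k := fun k =>
      max_zero_sub_max_neg_zero_eq_self (h k)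
    rw [tsum_congr this, Summable.tsum_sub hf.summable hg.summable, hf.tsum_eq, hg.tsum_eq, sub_self]
  have hsumabs : (∑' k, max (h k) 0) + ∑' k, max (-h k) 0 = ldist f g := by
    rw [← Summable.tsum_add hpos hneg]
    exact tsum_congr fun k => max_zero_add_max_neg_zero_eq_abs_self (h k)
  have hP : ∑' k, max (h k) 0 = ldist f g / 2 := by linarith
  have hNv : ∑' k, max (-h k) 0 = ldist f g / 2 := by linarith
  have hBdiff : (∑' k : B, f k) - ∑' k : B, g k = ∑' k : B, h k :=
    (Summable.tsum_sub (hf.summable.subtype B) (hg.summable.subtype B)).symm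
  have hupper : ∑' k : B, h k ≤ ldist f g / 2 := by
    calc ∑' k : B, h k ≤ ∑' k : B, max (h k) 0 :=
          Summable.tsum_le_tsum (fun k => le_max_left _ _) (hsub.subtype B) (hpos.subtype B)
      _ ≤ ∑' k, max (h k) 0 :=
          tsum_subtype_le_of_nonneg (fun k => le_max_right _ _) hpos B
      _ = ldist f g / 2 := hP
  have hlower : -(ldist f g / 2) ≤ ∑' k : B, h k := by
    have h2 : ∑' k : B, -h ↑k ≤ ldist f g / 2 := by
      calc ∑' k : B, -h ↑k ≤ ∑' k : B, max (-h ↑k) 0 :=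
            Summable.tsum_le_tsum (fun k => le_max_left _ _) (hsub.neg.subtype B) (hneg.subtype B)
        _ ≤ ∑' k, max (-h k) 0 :=
            tsum_subtype_le_of_nonneg (fun k => le_max_right _ _) hneg B
        _ = ldist f g / 2 := hNv
    have h3 : ∑' k : B, -h ↑k = -∑' k : B, h ↑k := tsum_neg
    linarith
  rw [hBdiff]
  exact abs_le.mpr ⟨hlower, hupper⟩


section Measure
variable {Ω : Type*} [MeasureSpace Ω] [IsProbabilityMeasure (volume : Measure Ω)]

def rpmf (X : Ω → ℕ) : ℕ → ℝ := fun k => (volume {ω | X ω = k}).toReal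

lemma measure_eq_ne_top (X : Ω → ℕ) (k : ℕ) : volume {ω | X ω = k} ≠ ⊤ :=
  measure_ne_top _ _

lemma tsum_measure_eq_one {X : Ω → ℕ} (hX : Measurable X) :
    ∑' k, volume {ω | X ω = k} = 1 := by
  have hset : ∀ k, {ω | X ω = k} = X ⁻¹' {k} := fun k => rfl
  have hdisj : Pairwise (Function.onFun Disjoint fun k => X ⁻¹' {k}) := by
    intro i j hij
    exact Set.disjoint_left.mpr fun ω hi hj => hij (hi.symm.trans hj)
  have hmeas : ∀ k : ℕ, MeasurableSet (X ⁻¹' {k}) := fun k => hX (measurableSet_singleton k)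
  calc ∑' k, volume {ω | X ω = k} = volume (⋃ k, X ⁻¹' {k}) := by
        simp_rw [hset]; exact (measure_iUnion hdisj hmeas).symm
    _ = 1 := by
        have : (⋃ k, X ⁻¹' {k}) = Set.univ := by ext ω; simp
        rw [this, measure_univ]

lemma rpmf_pmf {X : Ω → ℕ} (hX : Measurable X) : IsPMF (rpmf X) := by
  refine ⟨fun k => ENNReal.toReal_nonneg, ?_, ?_⟩
  · exact ENNReal.summable_toReal (by rw [tsum_measure_eq_one hX]; exact ENNReal.one_ne_top)
  · show ∑' k, (volume {ω | X ω = k}).toReal = 1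
    rw [← ENNReal.tsum_toReal_eq fun k => measure_eq_ne_top X k, tsum_measure_eq_one hX,
      ENNReal.toReal_one]

lemma measure_mem_eq_tsum {X : Ω → ℕ} (hX : Measurable X) (B : Set ℕ) :
    (volume {ω | X ω ∈ B}).toReal = ∑' k : B, rpmf X k := by
  have hset : {ω | X ω ∈ B} = ⋃ k : B, X ⁻¹' {(k : ℕ)} := by
    ext ω; simp
  have hdisj : Pairwise (Function.onFun Disjoint fun k : B => X ⁻¹' {(k : ℕ)}) := by
    intro i j hij
    have : (i : ℕ) ≠ (j : ℕ) := fun h => hij (Subtype.ext h)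
    exact Set.disjoint_left.mpr fun ω hi hj => this (hi.symm.trans hj)
  rw [hset, measure_iUnion hdisj fun k => hX (measurableSet_singleton _),
    ENNReal.tsum_toReal_eq fun k => measure_ne_top _ _]
  rfl

lemma rpmf_add {X Y : Ω → ℕ} (hX : Measurable X) (hY : Measurable Y)
    (hindep : IndepFun X Y volume) :
    rpmf (fun ω => X ω + Y ω) = pconv (rpmf X) (rpmf Y) := by
  funext k
  have hset : {ω | X ω + Y ω = k} =
      ⋃ i ∈ Finset.range (k+1), (X ⁻¹' {i} ∩ Y ⁻¹' {k - i}) := by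
    ext ω
    simp only [Set.mem_setOf_eq, Set.mem_iUnion, Finset.mem_range, Set.mem_inter_iff,
      Set.mem_preimage, Set.mem_singleton_iff]
    constructor
    · intro h
      exact ⟨X ω, by omega, rfl, by omega⟩
    · rintro ⟨i, hi, hXi, hYi⟩
      omega
  have hdisj : Set.PairwiseDisjoint (↑(Finset.range (k+1)))
      (fun i => X ⁻¹' {i} ∩ Y ⁻¹' {k - i}) := by
    intro i _ j _ hij
    refine Set.disjoint_left.mpr fun ω hi hj => ?_
    exact hij (hi.1.symm.trans hj.1)
  have hmeas : ∀ i ∈ Finset.range (k+1), MeasurableSet (X ⁻¹' {i} ∩ Y ⁻¹' {k - i}) :=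
    fun i _ => (hX (measurableSet_singleton _)).inter (hY (measurableSet_singleton _))
  rw [show rpmf (fun ω => X ω + Y ω) k = (volume {ω | X ω + Y ω = k}).toReal from rfl,
    hset, measure_biUnion_finset hdisj hmeas]
  rw [ENNReal.toReal_sum fun i _ => (measure_ne_top _ _)]
  refine Finset.sum_congr rfl fun i _ => ?_
  rw [hindep.measure_inter_preimage_eq_mul _ _ (measurableSet_singleton _)
    (measurableSet_singleton _), ENNReal.toReal_mul]
  rfl

end Measure

end PoissonAux

open PoissonAux

theorem poisson_approximation (Ω : Type*) [MeasureSpace Ω]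
    [IsProbabilityMeasure (volume : Measure Ω)]
    (n : ℕ) (p : Fin n → ℝ) (hp : ∀ i, p i ∈ Set.Ioc (0 : ℝ) 1)
    (ξ : Fin n → Ω → ℕ) (hmeas : ∀ i, Measurable (ξ i))
    (hind : iIndepFun ξ volume)
    (hber1 : ∀ i, (volume {ω | ξ i ω = 1}).toReal = p i)
    (hber0 : ∀ i, (volume {ω | ξ i ω = 0}).toReal = 1 - p i)
    (N : Ω → ℕ) (hNmeas : Measurable N)
    (hN : ∀ k : ℕ, (volume {ω | N ω = k}).toReal =
      Real.exp (-(∑ i, p i)) * (∑ i, p i) ^ k / (Nat.factorial k)) :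
    (⨆ B : Set ℕ,
        |(volume {ω | (∑ i, ξ i ω) ∈ B}).toReal - (volume {ω | N ω ∈ B}).toReal|)
      ≤ ∑ i, (p i) ^ 2 := by
  classical
  have hSmeas : Measurable fun ω => ∑ i, ξ i ω :=
    Finset.measurable_sum _ fun i _ => hmeas i
  have hbern : ∀ i, rpmf (ξ i) = bern (p i) := by
    intro i
    funext k
    match k with
    | 0 => exact (hber0 i).trans (by norm_num [bern])
    | 1 => exact (hber1 i).trans (by norm_num [bern])
    | (m + 2) =>
      have hd : Disjoint {ω | ξ i ω = 0} {ω | ξ i ω = 1} :=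
        Set.disjoint_left.mpr fun ω h0 h1 => by simp only [Set.mem_setOf_eq] at h0 h1; omega
      have hm1 : MeasurableSet {ω | ξ i ω = 1} := hmeas i (measurableSet_singleton 1)
      have hm0 : MeasurableSet {ω | ξ i ω = 0} := hmeas i (measurableSet_singleton 0)
      have h01 : volume ({ω | ξ i ω = 0} ∪ {ω | ξ i ω = 1}) = 1 := by
        rw [← ENNReal.toReal_eq_one_iff, measure_union hd hm1,
          ENNReal.toReal_add (measure_ne_top _ _) (measure_ne_top _ _), hber0 i, hber1 i]
        ring
      have hc : volume (({ω | ξ i ω = 0} ∪ {ω | ξ i ω = 1})ᶜ) = 0 := by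
        rw [measure_compl (hm0.union hm1) (measure_ne_top _ _), h01, measure_univ, tsub_self]
      have hsub : {ω | ξ i ω = m + 2} ⊆ ({ω | ξ i ω = 0} ∪ {ω | ξ i ω = 1})ᶜ := by
        intro ω h
        simp only [Set.mem_setOf_eq] at h
        simp only [Set.mem_compl_iff, Set.mem_union, Set.mem_setOf_eq]
        omega
      have hz : volume {ω | ξ i ω = m + 2} = 0 := measure_mono_null hsub hc
      show (volume {ω | ξ i ω = m + 2}).toReal = bern (p i) (m + 2)
      rw [hz]
      simp [bern]
  have key : ∀ s : Finset (Fin n),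
      ldist (rpmf fun ω => ∑ i ∈ s, ξ i ω) (poi (∑ i ∈ s, p i)) ≤ 2 * ∑ i ∈ s, p i ^ 2 := by
    intro s
    induction s using Finset.induction_on with
    | empty =>
      have h1 : (rpmf fun ω : Ω => ∑ i ∈ (∅ : Finset (Fin n)), ξ i ω) = poi 0 := by
        funext k
        show (volume {ω : Ω | (∑ i ∈ (∅ : Finset (Fin n)), ξ i ω) = k}).toReal = poi 0 k
        match k with
        | 0 => simp [poi]
        | (m + 1) => simp [poi]
      rw [h1]
      simp only [Finset.sum_empty]
      simp [ldist]
    | @insert j s hj ih =>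
      set fT := rpmf fun ω : Ω => ∑ i ∈ s, ξ i ω with hfTdef
      have hTmeas : Measurable fun ω : Ω => ∑ i ∈ s, ξ i ω :=
        Finset.measurable_sum _ fun i _ => hmeas i
      have hfT : IsPMF fT := rpmf_pmf hTmeas
      have hpj0 : (0:ℝ) ≤ p j := (hp j).1.le
      have hpj1 : p j ≤ 1 := (hp j).2
      have hbp : IsPMF (bern (p j)) := bern_pmf hpj0 hpj1
      have hls : (0:ℝ) ≤ ∑ i ∈ s, p i := Finset.sum_nonneg fun i _ => (hp i).1.le
      have hpp : IsPMF (poi (∑ i ∈ s, p i)) := poi_pmf hls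
      have hppj : IsPMF (poi (p j)) := poi_pmf hpj0
      have hindep : IndepFun (ξ j) (fun ω => ∑ i ∈ s, ξ i ω) volume := by
        have h := (hind.indepFun_finsetSum_of_notMem hmeas hj).symm
        have he : (∑ k ∈ s, ξ k) = fun ω => ∑ i ∈ s, ξ i ω := by
          funext ω; exact Finset.sum_apply ω s ξ
        rwa [he] at h
      have e1 : (rpmf fun ω : Ω => ∑ i ∈ insert j s, ξ i ω) = pconv (bern (p j)) fT := by
        have e0 : (fun ω : Ω => ∑ i ∈ insert j s, ξ i ω)
            = fun ω => ξ j ω + ∑ i ∈ s, ξ i ω := by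
          funext ω; exact Finset.sum_insert hj
        rw [e0, rpmf_add (hmeas j) hTmeas hindep, hbern j]
      rw [e1, Finset.sum_insert hj, Finset.sum_insert hj, ← poi_add]
      calc ldist (pconv (bern (p j)) fT) (pconv (poi (p j)) (poi (∑ i ∈ s, p i)))
          ≤ ldist (pconv (bern (p j)) fT) (pconv (poi (p j)) fT)
            + ldist (pconv (poi (p j)) fT) (pconv (poi (p j)) (poi (∑ i ∈ s, p i))) :=
            ldist_triangle (pconv_pmf hbp hfT) (pconv_pmf hppj hfT) (pconv_pmf hppj hpp)
        _ ≤ ldist (bern (p j)) (poi (p j)) + ldist fT (poi (∑ i ∈ s, p i)) :=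
            add_le_add (ldist_pconv_right hfT hbp hppj) (ldist_pconv_left hppj hfT hpp)
        _ ≤ 2 * p j ^ 2 + 2 * ∑ i ∈ s, p i ^ 2 := add_le_add (bern_poi_dist hpj0 hpj1) ih
        _ = 2 * (p j ^ 2 + ∑ i ∈ s, p i ^ 2) := by ring
  refine Real.iSup_le (fun B => ?_) (Finset.sum_nonneg fun i _ => sq_nonneg _)
  have hlam : rpmf N = poi (∑ i, p i) := funext fun k => hN k
  rw [measure_mem_eq_tsum hSmeas B, measure_mem_eq_tsum hNmeas B]
  have h1 := set_diff_le_ldist (rpmf_pmf hSmeas) (rpmf_pmf hNmeas) B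
  have h2 := key Finset.univ
  rw [hlam] at h1 ⊢
  have h3 : ldist (rpmf fun ω => ∑ i, ξ i ω) (poi (∑ i, p i)) ≤ 2 * ∑ i, p i ^ 2 := h2
  linarith
end PoissonAux
end
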